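/- If G is a graph on n vertices missing m edges relative to the complete graph K_n (i.e., |E_G| = C(n,2) − m), then rank(ρ^p_G) ≤ 2^n − n − m for all p. In particular, for m ≥ 1 and 0 < p < 1, ρ^p_G is never unitarily (hence never locally unitarily) equivalent to ρ^p_{K_n}. -/

import Mathlib

open scoped BigOperators

/-- The graph state amplitude function for edge set `E` on `n` qubits:
`|G⟩ = ∏ CZ |+⟩^⊗n`, whose amplitude on a computational basis state `x` is
`2^(-n/2)` times `(-1)` for every edge both of whose endpoints are in state `1`. -/
noncomputable def gs (n : ℕ) (E : Finset (Sym2 (Fin n))) : (Fin n → Fin 2) → ℂ :=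
  fun x => ((Real.sqrt 2)⁻¹ : ℝ) ^ n *
    ∏ e ∈ E, (if ∀ i ∈ e, x i = 1 then (-1 : ℂ) else 1)

/-- Inner product `⟨v|w⟩` on the `n`-qubit state space. -/
noncomputable def ip {n : ℕ} (v w : (Fin n → Fin 2) → ℂ) : ℂ :=
  ∑ x, (starRingEnd ℂ) (v x) * w x

/-- The edge set of the complete graph on `n` labeled vertices. -/
def completeEdges (n : ℕ) : Finset (Sym2 (Fin n)) :=
  Finset.univ.filter fun e => ¬ e.IsDiag

lemma mem_completeEdges {n : ℕ} {e : Sym2 (Fin n)} : e ∈ completeEdges n ↔ ¬ e.IsDiag := by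
  simp [completeEdges]

lemma gs_real {n : ℕ} (E : Finset (Sym2 (Fin n))) (x : Fin n → Fin 2) :
    (starRingEnd ℂ) (gs n E x) = gs n E x := by
  unfold gs
  rw [map_mul, map_prod]
  congr 1
  · rw [map_pow, Complex.conj_ofReal]
  · exact Finset.prod_congr rfl fun e _ => by split <;> simp

lemma gs_eq_const {n : ℕ} {F : Finset (Sym2 (Fin n))} {x : Fin n → Fin 2}
    (hx : ∀ e ∈ F, ¬ ∀ i ∈ e, x i = 1) :
    gs n F x = (((Real.sqrt 2)⁻¹ : ℝ) : ℂ) ^ n := by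
  unfold gs
  rw [Finset.prod_congr rfl (fun e he => if_neg (hx e he)), Finset.prod_const_one, mul_one]

section special
variable {n : ℕ}

def x0 : Fin n → Fin 2 := fun _ => 0

def xs (i : Fin n) : Fin n → Fin 2 := fun j => if j = i then 1 else 0

def xp (e : Sym2 (Fin n)) : Fin n → Fin 2 := fun j => if j ∈ e then 1 else 0

lemma not_all_one_x0 {F : Finset (Sym2 (Fin n))} :
    ∀ e ∈ F, ¬ ∀ i ∈ e, x0 i = 1 := by
  intro e _ h
  induction e with
  | _ u v =>
    have := h u (Sym2.mem_mk_left u v)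
    simp [x0] at this

lemma not_all_one_xs {F : Finset (Sym2 (Fin n))} (hF : F ⊆ completeEdges n) (i : Fin n) :
    ∀ e ∈ F, ¬ ∀ j ∈ e, xs i j = 1 := by
  intro e he h
  have hd : ¬ e.IsDiag := mem_completeEdges.1 (hF he)
  induction e with
  | _ u v =>
    have hu := h u (Sym2.mem_mk_left u v)
    have hv := h v (Sym2.mem_mk_right u v)
    simp only [xs] at hu hv
    have hu' : u = i := by by_contra hc; simp [hc] at hu
    have hv' : v = i := by by_contra hc; simp [hc] at hv
    exact hd (by rw [hu', hv']; exact Sym2.mk_isDiag_iff.2 rfl)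

lemma not_all_one_xp {E F : Finset (Sym2 (Fin n))} (hF : F ⊆ E) (hFc : F ⊆ completeEdges n)
    {f : Sym2 (Fin n)} (hfd : ¬ f.IsDiag) (hfE : f ∉ E) :
    ∀ e ∈ F, ¬ ∀ j ∈ e, xp f j = 1 := by
  intro e he h
  have hed : ¬ e.IsDiag := mem_completeEdges.1 (hFc he)
  have hd : e ≠ f := by rintro rfl; exact hfE (hF he)
  apply hd
  induction e with
  | _ u v =>
    have huv : u ≠ v := fun hc => hed (by rw [hc]; exact Sym2.mk_isDiag_iff.2 rfl)
    have hu := h u (Sym2.mem_mk_left u v)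
    have hv := h v (Sym2.mem_mk_right u v)
    simp only [xp] at hu hv
    have hu' : u ∈ f := by by_contra hc; simp [hc] at hu
    have hv' : v ∈ f := by by_contra hc; simp [hc] at hv
    induction f with
    | _ a b =>
      rw [Sym2.mem_iff] at hu' hv'
      rcases hu' with rfl | rfl <;> rcases hv' with rfl | rfl
      · exact absurd rfl huv
      · rfl
      · exact Sym2.eq_swap
      · exact absurd rfl huv
end special

section part1
variable {n : ℕ} (E : Finset (Sym2 (Fin n)))

def chi (E : Finset (Sym2 (Fin n))) :
    (Fin n ⊕ {e : Sym2 (Fin n) // e ∈ completeEdges n \ E}) → (Fin n → Fin 2)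
  | Sum.inl i => xs i
  | Sum.inr e => xp e.1

lemma xs_ne_x0 (i : Fin n) : xs i ≠ (x0 : Fin n → Fin 2) := by
  intro h
  have := congr_fun h i
  simp [xs, x0] at this

lemma xp_ne_x0 {e : Sym2 (Fin n)} (he : e ∈ completeEdges n \ E) : xp e ≠ (x0 : Fin n → Fin 2) := by
  intro h
  induction e with
  | _ a b =>
    have := congr_fun h a
    simp [xp, Sym2.mem_mk_left, x0] at this

lemma xs_ne_xp (i : Fin n) {e : Sym2 (Fin n)} (he : e ∈ completeEdges n \ E) : xs i ≠ xp e := by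
  intro h
  have hed : ¬ e.IsDiag := mem_completeEdges.1 (Finset.mem_sdiff.1 he).1
  induction e with
  | _ a b =>
    have hab : a ≠ b := fun hc => hed (by rw [hc]; exact Sym2.mk_isDiag_iff.2 rfl)
    have ha := congr_fun h a
    have hb := congr_fun h b
    simp only [xs, xp, Sym2.mem_mk_left, Sym2.mem_mk_right, if_pos] at ha hb
    have ha' : a = i := by by_contra hc; simp [hc] at ha
    have hb' : b = i := by by_contra hc; simp [hc] at hb
    exact hab (ha'.trans hb'.symm)

lemma chi_injective : Function.Injective (chi E) := by
  rintro (i | e) (j | f) h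
  · have := congr_fun h j
    simp only [chi, xs] at this
    by_cases hc : i = j
    · rw [hc]
    · simp [Ne.symm hc, hc] at this
  · exact absurd h (xs_ne_xp E i f.2)
  · exact absurd h.symm (xs_ne_xp E j e.2)
  · simp only [chi] at h
    congr 1
    apply Subtype.ext
    apply Sym2.ext
    intro z
    have := congr_fun h z
    simp only [xp] at this
    constructor
    · intro hz; by_contra hc; simp [hz, hc] at this
    · intro hz; by_contra hc; simp [hz, hc] at this

lemma chi_ne_x0 (d) : chi E d ≠ (x0 : Fin n → Fin 2) := by
  rcases d with i | e
  · exact xs_ne_x0 i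
  · exact xp_ne_x0 E e.2

noncomputable def Lmap (E : Finset (Sym2 (Fin n))) :
    ((Fin n → Fin 2) → ℂ) →ₗ[ℂ]
      (((Fin n ⊕ {e : Sym2 (Fin n) // e ∈ completeEdges n \ E})) → ℂ) where
  toFun f := fun d => f (chi E d) - f x0
  map_add' f g := by funext d; simp; ring
  map_smul' c f := by funext d; simp [smul_sub]; ring

lemma Lmap_surjective : Function.Surjective (Lmap E) := by
  intro g
  refine ⟨Function.extend (chi E) g 0, ?_⟩
  funext d
  simp only [Lmap, LinearMap.coe_mk, AddHom.coe_mk]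
  rw [(chi_injective E).extend_apply, Function.extend_apply']
  · simp
  · rintro ⟨d', hd'⟩
    exact chi_ne_x0 E d' hd'

lemma gs_mem_ker_Lmap (hE : E ⊆ completeEdges n) {F : Finset (Sym2 (Fin n))} (hF : F ⊆ E) :
    gs n F ∈ LinearMap.ker (Lmap E) := by
  rw [LinearMap.mem_ker]
  funext d
  simp only [Lmap, LinearMap.coe_mk, AddHom.coe_mk, Pi.zero_apply]
  rw [gs_eq_const not_all_one_x0, sub_eq_zero]
  rcases d with i | ⟨e, he⟩
  · exact gs_eq_const (not_all_one_xs (hF.trans hE) i)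
  · rcases Finset.mem_sdiff.1 he with ⟨hec, heE⟩
    exact gs_eq_const (not_all_one_xp hF (hF.trans hE) (mem_completeEdges.1 hec) heE)
end part1

lemma finrank_ker_Lmap {n m : ℕ} (E : Finset (Sym2 (Fin n)))
    (hE : E ⊆ completeEdges n) (hcard : E.card + m = (completeEdges n).card) :
    Module.finrank ℂ (LinearMap.ker (Lmap E)) = 2 ^ n - (n + m) := by
  have hrn := LinearMap.finrank_range_add_finrank_ker (Lmap E)
  have hdom : Module.finrank ℂ ((Fin n → Fin 2) → ℂ) = 2 ^ n := by
    rw [Module.finrank_fintype_fun_eq_card, Fintype.card_fun]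
    simp
  have hsdiff : (completeEdges n \ E).card = m := by
    rw [Finset.card_sdiff_of_subset hE, ← hcard]
    omega
  have hrange : Module.finrank ℂ (LinearMap.range (Lmap E)) = n + m := by
    rw [LinearMap.range_eq_top.2 (Lmap_surjective E), finrank_top,
      Module.finrank_fintype_fun_eq_card, Fintype.card_sum, Fintype.card_fin,
      Fintype.card_coe, hsdiff]
  omega

lemma part1_bound {n m : ℕ} (E : Finset (Sym2 (Fin n)))
    (hE : E ⊆ completeEdges n) (hcard : E.card + m = (completeEdges n).card)
    (p : ℝ)
    (ρG : ((Fin n → Fin 2) → ℂ) →ₗ[ℂ] ((Fin n → Fin 2) → ℂ))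
    (hρG : ∀ w, ρG w = ∑ F ∈ E.powerset,
      (((p ^ F.card * (1 - p) ^ (E.card - F.card) : ℝ) : ℂ) *
        ∑ x, (starRingEnd ℂ) (gs n F x) * w x) • gs n F) :
    Module.finrank ℂ (LinearMap.range ρG) ≤ 2 ^ n - n - m := by
  have hle : LinearMap.range ρG ≤ LinearMap.ker (Lmap E) := by
    rintro v ⟨w, rfl⟩
    rw [hρG]
    exact Submodule.sum_mem _ fun F hF =>
      Submodule.smul_mem _ _ (gs_mem_ker_Lmap E hE (Finset.mem_powerset.1 hF))
  calc Module.finrank ℂ (LinearMap.range ρG)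
      ≤ Module.finrank ℂ (LinearMap.ker (Lmap E)) := Submodule.finrank_mono hle
    _ = 2 ^ n - (n + m) := finrank_ker_Lmap E hE hcard
    _ ≤ 2 ^ n - n - m := by omega

section part2
variable {n : ℕ}

noncomputable def gS (n : ℕ) (S : Finset (Fin n)) : (Fin n → Fin 2) → ℂ :=
  fun x => if ∀ i ∈ S, x i = 1 then 1 else 0

noncomputable def SpanK (n : ℕ) : Submodule ℂ ((Fin n → Fin 2) → ℂ) :=
  Submodule.span ℂ (Set.range fun F : {F // F ∈ (completeEdges n).powerset} => gs n F.1)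

lemma sqrt2_pow_ne : ((((Real.sqrt 2)⁻¹ : ℝ) : ℂ) ^ n) ≠ 0 := by
  apply pow_ne_zero
  simp only [ne_eq, Complex.ofReal_eq_zero, inv_eq_zero]
  positivity

lemma gs_mem_SpanK {F : Finset (Sym2 (Fin n))} (hF : F ⊆ completeEdges n) :
    gs n F ∈ SpanK n :=
  Submodule.subset_span ⟨⟨F, Finset.mem_powerset.2 hF⟩, rfl⟩

lemma gS_empty_mem_SpanK : gS n ∅ ∈ SpanK n := by
  have h : gS n ∅ = ((((Real.sqrt 2)⁻¹ : ℝ) : ℂ) ^ n)⁻¹ • gs n (∅ : Finset (Sym2 (Fin n))) := by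
    funext x
    simp only [gS, Finset.notMem_empty, false_implies, implies_true, if_true, Pi.smul_apply,
      gs, Finset.prod_empty, mul_one, smul_eq_mul]
    rw [inv_mul_cancel₀ sqrt2_pow_ne]
  rw [h]
  exact Submodule.smul_mem _ _ (gs_mem_SpanK (Finset.empty_subset _))

lemma pair_mem_completeEdges {a b : Fin n} (hab : a ≠ b) : s(a, b) ∈ completeEdges n :=
  mem_completeEdges.2 (by simp [Sym2.mk_isDiag_iff, hab])

lemma star_expand (a : Fin n) (B : Finset (Fin n)) (ha : a ∉ B) :
    gs n (B.image fun b => s(a, b)) = (((Real.sqrt 2)⁻¹ : ℝ) : ℂ) ^ n •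
      ∑ T ∈ B.powerset, ((-2 : ℂ) ^ T.card •
        (if T = ∅ then (fun _ => 1) else gS n (insert a T))) := by
  funext x
  have hinj : Set.InjOn (fun b => s(a, b)) B := by
    intro b hb b' hb' h
    simp only [Sym2.eq_iff, Sym2.mk_eq_mk_iff, Prod.mk.injEq, Prod.swap_prod_mk] at h
    rcases h with ⟨_, rfl⟩ | ⟨rfl, rfl⟩
    · rfl
    · exact absurd hb ha
  unfold gs
  rw [Finset.prod_image hinj]
  have hfac : ∀ b ∈ B, (if ∀ i ∈ s(a, b), x i = 1 then (-1 : ℂ) else 1)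
      = (-2) * (if x a = 1 ∧ x b = 1 then 1 else 0) + 1 := by
    intro b _
    have : (∀ i ∈ s(a, b), x i = 1) ↔ (x a = 1 ∧ x b = 1) := by
      constructor
      · intro h; exact ⟨h a (Sym2.mem_mk_left a b), h b (Sym2.mem_mk_right a b)⟩
      · rintro ⟨h1, h2⟩ i hi
        rcases Sym2.mem_iff.1 hi with rfl | rfl <;> assumption
    rw [if_congr this rfl rfl]
    split <;> norm_num
  rw [Finset.prod_congr rfl hfac, Finset.prod_add]
  simp only [Pi.smul_apply, Finset.sum_apply, smul_eq_mul]
  congr 1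
  apply Finset.sum_congr rfl
  intro T hT
  rw [Finset.mem_powerset] at hT
  rw [Finset.prod_const_one, mul_one, Finset.prod_mul_distrib, Finset.prod_const,
    Finset.prod_boole]
  rcases eq_or_ne T ∅ with rfl | hTne
  · simp
  · simp only [if_neg hTne, Pi.smul_apply, smul_eq_mul, gS]
    have : (∀ b ∈ T, x a = 1 ∧ x b = 1) ↔ (∀ i ∈ insert a T, x i = 1) := by
      obtain ⟨b0, hb0⟩ := Finset.nonempty_of_ne_empty hTne
      constructor
      · intro h i hi
        rcases Finset.mem_insert.1 hi with rfl | hi'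
        · exact (h b0 hb0).1
        · exact (h i hi').2
      · intro h b hb
        exact ⟨h a (Finset.mem_insert_self a T), h b (Finset.mem_insert_of_mem hb)⟩
    simp only [this]

lemma gS_mem_SpanK : ∀ (S : Finset (Fin n)), S.card ≠ 1 → gS n S ∈ SpanK n := by
  intro S
  induction S using Finset.strongInduction with
  | _ S ih =>
    intro hcard
    rcases eq_or_ne S ∅ with rfl | hSne
    · exact gS_empty_mem_SpanK
    · -- S.card ≥ 2
      have hS2 : 2 ≤ S.card := by
        rcases Finset.nonempty_of_ne_empty hSne with ⟨a, haS⟩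
        have : 1 ≤ S.card := Finset.card_pos.2 ⟨a, haS⟩
        omega
      obtain ⟨a, haS⟩ := Finset.nonempty_of_ne_empty hSne
      set B := S.erase a with hB
      have haB : a ∉ B := Finset.notMem_erase a S
      have hBcard : B.card = S.card - 1 := Finset.card_erase_of_mem haS
      have hBS : insert a B = S := Finset.insert_erase haS
      have hF : (B.image fun b => s(a, b)) ⊆ completeEdges n := by
        intro e he
        rcases Finset.mem_image.1 he with ⟨b, hb, rfl⟩
        exact pair_mem_completeEdges (fun h => haB (h ▸ hb))
      have hexp := star_expand a B haB
      have hBmem : B ∈ B.powerset := Finset.mem_powerset_self B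
      rw [← Finset.add_sum_erase _ _ hBmem] at hexp
      have hBne : B ≠ ∅ := by
        intro h
        rw [h] at hBcard
        simp at hBcard
        omega
      rw [if_neg hBne, hBS] at hexp
      -- hexp : gs n F = c • ((-2)^B.card • gS n S + rest)
      have hrest : (∑ T ∈ (B.powerset).erase B, ((-2 : ℂ) ^ T.card •
          (if T = ∅ then (fun _ => (1 : ℂ)) else gS n (insert a T)))) ∈ SpanK n := by
        apply Submodule.sum_mem
        intro T hT
        apply Submodule.smul_mem
        rcases Finset.mem_erase.1 hT with ⟨hTB, hTp⟩
        rw [Finset.mem_powerset] at hTp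
        rcases eq_or_ne T ∅ with rfl | hTne
        · rw [if_pos rfl]
          have : (fun _ : Fin n → Fin 2 => (1 : ℂ)) = gS n ∅ := by
            funext x; simp [gS]
          rw [this]
          exact gS_empty_mem_SpanK
        · rw [if_neg hTne]
          have haT : a ∉ T := fun h => haB (hTp h)
          have hcardT : T.card < B.card := Finset.card_lt_card (hTp.ssubset_of_ne hTB)
          have hcardins : (insert a T).card = T.card + 1 := Finset.card_insert_of_notMem haT
          have hsub : insert a T ⊂ S := by
            refine Finset.ssubset_iff_subset_ne.2 ⟨?_, ?_⟩
            · rw [← hBS]; exact Finset.insert_subset_insert a hTp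
            · intro h
              have := congrArg Finset.card h
              omega
          have hc : (insert a T).card ≠ 1 := by
            have h1 : T.Nonempty := Finset.nonempty_of_ne_empty hTne
            have := Finset.card_insert_of_notMem (fun h => haB (hTp h))
            have := Finset.card_pos.2 h1
            omega
          exact ih _ hsub hc
      have hgsa : gs n (B.image fun b => s(a, b)) ∈ SpanK n := gs_mem_SpanK hF
      -- solve for gS n S
      have hckey : ((-2 : ℂ) ^ B.card) • gS n S =
          (((((Real.sqrt 2)⁻¹ : ℝ) : ℂ) ^ n)⁻¹ • gs n (B.image fun b => s(a, b))) -
          (∑ T ∈ (B.powerset).erase B, ((-2 : ℂ) ^ T.card •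
            (if T = ∅ then (fun _ => (1 : ℂ)) else gS n (insert a T)))) := by
        rw [hexp, smul_smul, inv_mul_cancel₀ sqrt2_pow_ne, one_smul]
        abel
      have hmem : ((-2 : ℂ) ^ B.card) • gS n S ∈ SpanK n := by
        rw [hckey]
        exact Submodule.sub_mem _ (Submodule.smul_mem _ _ hgsa) hrest
      have h2 : ((-2 : ℂ) ^ B.card) ≠ 0 := pow_ne_zero _ (by norm_num)
      have := Submodule.smul_mem _ (((-2 : ℂ) ^ B.card)⁻¹) hmem
      rwa [smul_smul, inv_mul_cancel₀ h2, one_smul] at this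

lemma gS_indep :
    LinearIndependent ℂ (fun S : {S : Finset (Fin n) // S.card ≠ 1} => gS n S.1) := by
  rw [linearIndependent_iff']
  intro s g hsum
  -- key: by strong induction on card
  have key : ∀ k : ℕ, ∀ i ∈ s, i.1.card = k → g i = 0 := by
    intro k
    induction k using Nat.strong_induction_on with
    | _ k ih =>
      intro i hi hik
      have heval := congr_fun hsum (fun t => if t ∈ i.1 then 1 else 0)
      simp only [Finset.sum_apply, Pi.smul_apply, smul_eq_mul, Pi.zero_apply, gS] at heval
      have hterm : ∀ j ∈ s, g j * (if ∀ t ∈ j.1, (if t ∈ i.1 then (1 : Fin 2) else 0) = 1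
          then (1 : ℂ) else 0) = if j.1 ⊆ i.1 then g j else 0 := by
        intro j _
        have hiff : (∀ t ∈ j.1, (if t ∈ i.1 then (1 : Fin 2) else 0) = 1) ↔ j.1 ⊆ i.1 := by
          constructor
          · intro h t ht
            have := h t ht
            by_contra hc
            simp [hc] at this
          · intro h t ht
            simp [h ht]
        rw [if_congr hiff rfl rfl]
        split <;> simp
      rw [Finset.sum_congr rfl hterm, Finset.sum_ite, Finset.sum_const, smul_zero, add_zero]
        at heval
      have hz : ∀ j ∈ s.filter (fun j => j.1 ⊆ i.1), j ≠ i → g j = 0 := by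
        intro j hj hji
        rcases Finset.mem_filter.1 hj with ⟨hjs, hsubj⟩
        have hne : j.1 ≠ i.1 := fun h => hji (Subtype.ext h)
        have : j.1.card < k := hik ▸ Finset.card_lt_card (hsubj.ssubset_of_ne hne)
        exact ih _ this j hjs rfl
      have hmem : i ∈ s.filter (fun j => j.1 ⊆ i.1) :=
        Finset.mem_filter.2 ⟨hi, Finset.Subset.refl _⟩
      rw [Finset.sum_eq_single_of_mem i hmem hz] at heval
      exact heval
  intro i hi
  exact key i.1.card i hi rfl

lemma card_ne_one_subtype : Fintype.card {S : Finset (Fin n) // S.card ≠ 1} = 2 ^ n - n := by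
  classical
  rw [Fintype.card_subtype]
  have h1 : (Finset.univ.filter fun S : Finset (Fin n) => S.card = 1).card = n := by
    have : (Finset.univ.filter fun S : Finset (Fin n) => S.card = 1)
        = Finset.univ.image fun i : Fin n => {i} := by
      ext S
      simp only [Finset.mem_filter, Finset.mem_univ, true_and, Finset.mem_image,
        Finset.card_eq_one]
      tauto
    rw [this, Finset.card_image_of_injective _ (fun a b h => by
      simpa using h), Finset.card_univ, Fintype.card_fin]
  have h2 := Finset.card_filter_add_card_filter_not
    (s := (Finset.univ : Finset (Finset (Fin n)))) (p := fun S => S.card = 1)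
  have h3 : (Finset.univ : Finset (Finset (Fin n))).card = 2 ^ n := by
    rw [Finset.card_univ]
    simp
  have h4 : (Finset.univ.filter fun S : Finset (Fin n) => ¬ S.card = 1).card
      = (Finset.univ.filter fun S : Finset (Fin n) => S.card ≠ 1).card := rfl
  omega

lemma finrank_SpanK_ge : 2 ^ n - n ≤ Module.finrank ℂ (SpanK n) := by
  classical
  have hmem : ∀ S : {S : Finset (Fin n) // S.card ≠ 1}, gS n S.1 ∈ SpanK n :=
    fun S => gS_mem_SpanK S.1 S.2
  set v : {S : Finset (Fin n) // S.card ≠ 1} → SpanK n := fun S => ⟨gS n S.1, hmem S⟩ with hv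
  have hindep : LinearIndependent ℂ v := by
    have := gS_indep (n := n)
    have hcomp : (fun S : {S : Finset (Fin n) // S.card ≠ 1} => gS n S.1)
        = (SpanK n).subtype ∘ v := rfl
    rw [hcomp] at this
    exact LinearIndependent.of_comp _ this
  have := hindep.fintype_card_le_finrank
  rwa [card_ne_one_subtype] at this

lemma rankK_ge {p : ℝ} (hp : 0 < p) (hp1 : p < 1)
    (ρK : ((Fin n → Fin 2) → ℂ) →ₗ[ℂ] ((Fin n → Fin 2) → ℂ))
    (hρK : ∀ w, ρK w = ∑ F ∈ (completeEdges n).powerset,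
      (((p ^ F.card * (1 - p) ^ ((completeEdges n).card - F.card) : ℝ) : ℂ) *
        ∑ x, (starRingEnd ℂ) (gs n F x) * w x) • gs n F) :
    2 ^ n - n ≤ Module.finrank ℂ (LinearMap.range ρK) := by
  classical
  set K := completeEdges n with hK
  set M : Matrix {F // F ∈ K.powerset} (Fin n → Fin 2) ℂ := fun F x => gs n F.1 x with hM
  -- kernel inclusion
  have hker : LinearMap.ker ρK ≤ LinearMap.ker M.mulVecLin := by
    intro w hw
    rw [LinearMap.mem_ker] at hw ⊢
    set r : Finset (Sym2 (Fin n)) → ℝ :=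
      fun F => p ^ F.card * (1 - p) ^ (K.card - F.card) with hr
    set z : Finset (Sym2 (Fin n)) → ℂ :=
      fun F => ∑ x, (starRingEnd ℂ) (gs n F x) * w x with hz
    have hrw : ∀ F, (starRingEnd ℂ) (z F) = ∑ x, gs n F x * (starRingEnd ℂ) (w x) := by
      intro F
      rw [hz]
      rw [map_sum]
      refine Finset.sum_congr rfl fun x _ => ?_
      rw [map_mul, RingHomCompTriple.comp_apply]
      simp
    have h00 : ∑ x, (starRingEnd ℂ) (w x) * (ρK w) x = 0 := by
      rw [hw]; simp
    have h0 : ∑ F ∈ K.powerset, ((r F : ℂ)) * (z F * (starRingEnd ℂ) (z F)) = 0 := by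
      calc ∑ F ∈ K.powerset, ((r F : ℂ)) * (z F * (starRingEnd ℂ) (z F))
          = ∑ F ∈ K.powerset, ∑ x, (starRingEnd ℂ) (w x) * (((r F : ℂ) * z F) * gs n F x) := by
            refine Finset.sum_congr rfl fun F _ => ?_
            rw [hrw F, Finset.mul_sum, Finset.mul_sum]
            refine Finset.sum_congr rfl fun x _ => by ring
        _ = ∑ x, (starRingEnd ℂ) (w x) * (∑ F ∈ K.powerset, ((r F : ℂ) * z F) * gs n F x) := by
            rw [Finset.sum_comm]
            refine Finset.sum_congr rfl fun x _ => by rw [Finset.mul_sum]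
        _ = ∑ x, (starRingEnd ℂ) (w x) * (ρK w) x := by
            refine Finset.sum_congr rfl fun x _ => ?_
            rw [hρK]
            simp only [Finset.sum_apply, Pi.smul_apply, smul_eq_mul]
            rfl
        _ = 0 := h00
    have hterm : ∀ F, ((r F : ℂ)) * (z F * (starRingEnd ℂ) (z F))
        = ((r F * Complex.normSq (z F) : ℝ) : ℂ) := by
      intro F
      rw [Complex.mul_conj]
      push_cast
      ring
    have hreal : ∑ F ∈ K.powerset, r F * Complex.normSq (z F) = 0 := by
      have : ((∑ F ∈ K.powerset, r F * Complex.normSq (z F) : ℝ) : ℂ) = 0 := by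
        rw [Complex.ofReal_sum, ← h0]
        exact Finset.sum_congr rfl fun F _ => (hterm F).symm
      exact_mod_cast this
    have hzero : ∀ F ∈ K.powerset, r F * Complex.normSq (z F) = 0 := by
      refine (Finset.sum_eq_zero_iff_of_nonneg ?_).1 hreal
      intro F _
      apply mul_nonneg
      · apply mul_nonneg (pow_nonneg hp.le _) (pow_nonneg (by linarith) _)
      · exact Complex.normSq_nonneg _
    have hzF : ∀ F ∈ K.powerset, z F = 0 := by
      intro F hF
      have hrpos : 0 < r F := mul_pos (pow_pos hp _) (pow_pos (by linarith) _)
      have := hzero F hF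
      have : Complex.normSq (z F) = 0 := by
        rcases mul_eq_zero.1 this with h | h
        · exact absurd h hrpos.ne'
        · exact h
      exact Complex.normSq_eq_zero.1 this
    funext F
    rw [Matrix.mulVecLin_apply]
    have : M.mulVec w F = z F := by
      rw [Matrix.mulVec, dotProduct]
      refine Finset.sum_congr rfl fun x _ => ?_
      exact congrArg (· * w x) (gs_real F.1 x).symm
    rw [this, hzF F.1 F.2, Pi.zero_apply]
  -- rank chain
  have hdom : Module.finrank ℂ ((Fin n → Fin 2) → ℂ) = 2 ^ n := by
    rw [Module.finrank_fintype_fun_eq_card, Fintype.card_fun]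
    simp
  have r1 := LinearMap.finrank_range_add_finrank_ker ρK
  have r2 := LinearMap.finrank_range_add_finrank_ker M.mulVecLin
  have r3 : Module.finrank ℂ (LinearMap.ker ρK) ≤ Module.finrank ℂ (LinearMap.ker M.mulVecLin) :=
    Submodule.finrank_mono hker
  have r4 : Module.finrank ℂ (LinearMap.range M.mulVecLin) = Module.finrank ℂ (SpanK n) := by
    have h1 : M.rank = Module.finrank ℂ (LinearMap.range M.mulVecLin) := rfl
    have h2 := M.rank_eq_finrank_span_row
    have h3 : Set.range M.row = Set.range fun F : {F // F ∈ (completeEdges n).powerset} => gs n F.1 := rfl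
    rw [← h1, h2, h3]
    rfl
  have r5 := finrank_SpanK_ge (n := n)
  omega


/-- if G misses m edges relative to the complete graph K_n, then the
randomized graph state ρ^p_G has rank at most 2^n - n - m; in particular for m ≥ 1 and
0 < p < 1 it is never unitarily (hence never locally unitarily) equivalent to ρ^p_{K_n}. -/
theorem rank_bound_missing_edges (n m : ℕ) (E : Finset (Sym2 (Fin n)))
    (hE : E ⊆ completeEdges n) (hcard : E.card + m = (completeEdges n).card)
    (p : ℝ)
    (ρG : ((Fin n → Fin 2) → ℂ) →ₗ[ℂ] ((Fin n → Fin 2) → ℂ))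
    (hρG : ∀ w, ρG w = ∑ F ∈ E.powerset,
      (((p ^ F.card * (1 - p) ^ (E.card - F.card) : ℝ) : ℂ) *
        ∑ x, (starRingEnd ℂ) (gs n F x) * w x) • gs n F)
    (ρK : ((Fin n → Fin 2) → ℂ) →ₗ[ℂ] ((Fin n → Fin 2) → ℂ))
    (hρK : ∀ w, ρK w = ∑ F ∈ (completeEdges n).powerset,
      (((p ^ F.card * (1 - p) ^ ((completeEdges n).card - F.card) : ℝ) : ℂ) *
        ∑ x, (starRingEnd ℂ) (gs n F x) * w x) • gs n F) :
    Module.finrank ℂ (LinearMap.range ρG) ≤ 2 ^ n - n - m ∧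
    (1 ≤ m → 0 < p → p < 1 →
      ¬ ∃ U : ((Fin n → Fin 2) → ℂ) ≃ₗ[ℂ] ((Fin n → Fin 2) → ℂ),
        (∀ v w, ip (U v) (U w) = ip v w) ∧ ρG = U.conj ρK) := by
  have h1 := part1_bound E hE hcard p ρG hρG
  refine ⟨h1, ?_⟩
  rintro hm hp hp1 ⟨U, -, hconj⟩
  have h2 := rankK_ge hp hp1 ρK hρK
  have hrange : LinearMap.range ρG
      = Submodule.map (U : ((Fin n → Fin 2) → ℂ) →ₗ[ℂ] ((Fin n → Fin 2) → ℂ))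
        (LinearMap.range ρK) := by
    rw [hconj, LinearEquiv.conj_apply, LinearMap.range_comp_of_range_eq_top _ U.symm.range,
      LinearMap.range_comp]
  have h3 : Module.finrank ℂ (LinearMap.range ρG) = Module.finrank ℂ (LinearMap.range ρK) := by
    rw [hrange, LinearEquiv.finrank_map_eq]
  have h4 : n < 2 ^ n := Nat.lt_two_pow_self
  omega
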